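/- Let Σ be an n×n symmetric positive definite real matrix, X an n×p real matrix of full column rank p with n > p, and W an n×(n−p) real matrix satisfying WᵀW = I_{n−p} and XᵀW = 0. Then det(WᵀΣW) · det(XᵀX) = det(Σ) · det(XᵀΣ⁻¹X). -/

import Mathlib

set_option maxHeartbeats 1000000

open Matrix

lemma posDef_conj_of_injective {m l : Type*} [Fintype m] [Fintype l] [DecidableEq m]
    [DecidableEq l] {A : Matrix m m ℝ} (hA : A.PosDef) (B : Matrix m l ℝ)
    (hB : Function.Injective B.mulVec) : (Bᵀ * A * B).PosDef := by
  rw [posDef_iff_dotProduct_mulVec]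
  constructor
  · have h := Matrix.isHermitian_conjTranspose_mul_mul B hA.1
    rwa [conjTranspose_eq_transpose_of_trivial] at h
  · intro x hx
    have hBx : B *ᵥ x ≠ 0 := fun h => hx (hB (by simpa using h))
    have h := (posDef_iff_dotProduct_mulVec.mp hA).2 hBx
    simp only [star_trivial, dotProduct_mulVec] at h ⊢
    rwa [Matrix.mul_assoc, ← vecMul_vecMul, vecMul_transpose, ← vecMul_vecMul]

lemma conj_submatrix {l m : Type*} [Fintype l] [Fintype m] [DecidableEq l] [DecidableEq m]
    (e : l ≃ m) (P : Matrix m l ℝ) (Q : Matrix m m ℝ) (R : Matrix m l ℝ) :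
    (P.submatrix id ⇑e.symm)ᵀ * Q * (R.submatrix id ⇑e.symm)
      = (Pᵀ * Q * R).submatrix ⇑e.symm ⇑e.symm := by
  have h1 : (P.submatrix id ⇑e.symm)ᵀ = Pᵀ.submatrix ⇑e.symm id := by
    rw [transpose_submatrix]
  have h2 : Q = Q.submatrix id ⇑(Equiv.refl m) := by simp
  rw [h1]
  calc Pᵀ.submatrix ⇑e.symm id * Q * R.submatrix id ⇑e.symm
      = Pᵀ.submatrix ⇑e.symm ⇑(Equiv.refl m) * Q.submatrix ⇑(Equiv.refl m) id
        * R.submatrix id ⇑e.symm := by simp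
    _ = (Pᵀ * Q).submatrix ⇑e.symm id * R.submatrix id ⇑e.symm := by
        rw [submatrix_mul_equiv]
    _ = (Pᵀ * Q).submatrix ⇑e.symm ⇑(Equiv.refl m)
        * R.submatrix ⇑(Equiv.refl m) ⇑e.symm := by simp
    _ = (Pᵀ * Q * R).submatrix ⇑e.symm ⇑e.symm := by rw [submatrix_mul_equiv]

theorem stmt_10 (n p : ℕ) (hnp : p < n)
    (S : Matrix (Fin n) (Fin n) ℝ) (hS : S.PosDef)
    (X : Matrix (Fin n) (Fin p) ℝ) (hX : X.rank = p)
    (W : Matrix (Fin n) (Fin (n - p)) ℝ) (hW : Wᵀ * W = 1) (hXW : Xᵀ * W = 0) :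
    (Wᵀ * S * W).det * (Xᵀ * X).det = S.det * (Xᵀ * S⁻¹ * X).det := by
  have hdetS : 0 < S.det := hS.det_pos
  have hSu : IsUnit S.det := hdetS.ne'.isUnit
  have hST : Sᵀ = S := by
    rw [← conjTranspose_eq_transpose_of_trivial]; exact hS.1
  have hSinvT : (S⁻¹)ᵀ = S⁻¹ := by rw [transpose_nonsing_inv, hST]
  have hSinv : S⁻¹.PosDef := hS.inv
  -- injectivity of mulVec X
  have hinjX : Function.Injective X.mulVec := by
    have hker : LinearMap.ker X.mulVecLin = ⊥ := by
      have hsum := X.mulVecLin.finrank_range_add_finrank_ker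
      rw [Matrix.rank] at hX
      rw [hX] at hsum
      simp only [Module.finrank_fintype_fun_eq_card, Fintype.card_fin] at hsum
      have h0 : Module.finrank ℝ (LinearMap.ker X.mulVecLin) = 0 := by omega
      exact Submodule.finrank_eq_zero.mp h0
    intro a b hab
    have : X.mulVecLin a = X.mulVecLin b := hab
    exact LinearMap.ker_eq_bot.mp hker this
  have hb : (Xᵀ * S⁻¹ * X).PosDef := posDef_conj_of_injective hSinv X hinjX
  have hbpos : 0 < (Xᵀ * S⁻¹ * X).det := hb.det_pos
  have hWX : Wᵀ * X = 0 := by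
    have := congrArg transpose hXW
    simpa [transpose_mul] using this
  -- the reindexing equivalence
  have hpn : p + (n - p) = n := by omega
  let e : Fin p ⊕ Fin (n - p) ≃ Fin n := finSumFinEquiv.trans (finCongr hpn)
  set B : Matrix (Fin n) (Fin n) ℝ := (fromCols X W).submatrix id ⇑e.symm with hB
  set A : Matrix (Fin n) (Fin n) ℝ := (fromCols (S⁻¹ * X) W).submatrix id ⇑e.symm with hA
  have hTX : (fromCols X W)ᵀ = fromRows Xᵀ Wᵀ := transpose_fromCols X W
  have hTA : (fromCols (S⁻¹ * X) W)ᵀ = fromRows (Xᵀ * S⁻¹) Wᵀ := by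
    rw [transpose_fromCols, transpose_mul, hSinvT]
  -- h1 : B.det ^ 2 = det (XᵀX)
  have h1 : B.det ^ 2 = (Xᵀ * X).det := by
    have hc := conj_submatrix e (fromCols X W) (1 : Matrix (Fin n) (Fin n) ℝ) (fromCols X W)
    rw [Matrix.mul_one, Matrix.mul_one] at hc
    have hblock : (fromCols X W)ᵀ * (1 : Matrix (Fin n) (Fin n) ℝ) * fromCols X W
        = fromBlocks (Xᵀ * X) 0 0 1 := by
      rw [Matrix.mul_one, hTX, fromRows_mul_fromCols, hXW, hWX, hW]
    calc B.det ^ 2 = (Bᵀ * B).det := by rw [det_mul, det_transpose]; ring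
      _ = (fromBlocks (Xᵀ * X) (0 : Matrix (Fin p) (Fin (n-p)) ℝ) 0 1).det := by
          rw [Matrix.mul_one] at hblock
          rw [hc, hblock, det_submatrix_equiv_self]
      _ = (Xᵀ * X).det := by rw [det_fromBlocks_zero₂₁, det_one, mul_one]
  -- h2 : S.det * A.det ^ 2 = det (XᵀS⁻¹X) * det (WᵀSW)
  have h2 : S.det * A.det ^ 2 = (Xᵀ * S⁻¹ * X).det * (Wᵀ * S * W).det := by
    have hc := conj_submatrix e (fromCols (S⁻¹ * X) W) S (fromCols (S⁻¹ * X) W)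
    have hblock : (fromCols (S⁻¹ * X) W)ᵀ * S * fromCols (S⁻¹ * X) W
        = fromBlocks (Xᵀ * S⁻¹ * X) 0 0 (Wᵀ * S * W) := by
      have hdiag : Xᵀ * S⁻¹ * S * (S⁻¹ * X) = Xᵀ * S⁻¹ * X := by
        rw [show Xᵀ * S⁻¹ * S * (S⁻¹ * X) = Xᵀ * S⁻¹ * (S * S⁻¹) * X by
          simp only [Matrix.mul_assoc], Matrix.mul_nonsing_inv S hSu, Matrix.mul_one]
      have hoff1 : Xᵀ * S⁻¹ * S * W = 0 := by
        rw [show Xᵀ * S⁻¹ * S * W = Xᵀ * (S⁻¹ * S) * W by simp only [Matrix.mul_assoc],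
          Matrix.nonsing_inv_mul S hSu, Matrix.mul_one, hXW]
      have hoff2 : Wᵀ * S * (S⁻¹ * X) = 0 := by
        rw [show Wᵀ * S * (S⁻¹ * X) = Wᵀ * (S * S⁻¹) * X by simp only [Matrix.mul_assoc],
          Matrix.mul_nonsing_inv S hSu, Matrix.mul_one, hWX]
      rw [hTA, fromRows_mul, fromRows_mul_fromCols, hdiag, hoff1, hoff2]
    calc S.det * A.det ^ 2 = (Aᵀ * S * A).det := by
          rw [det_mul, det_mul, det_transpose]; ring
      _ = (fromBlocks (Xᵀ * S⁻¹ * X) (0 : Matrix (Fin p) (Fin (n-p)) ℝ) 0 (Wᵀ * S * W)).det := by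
          rw [hc, hblock, det_submatrix_equiv_self]
      _ = (Xᵀ * S⁻¹ * X).det * (Wᵀ * S * W).det := det_fromBlocks_zero₂₁ _ _ _
  -- h3 : B.det * A.det = det (XᵀS⁻¹X)
  have h3 : B.det * A.det = (Xᵀ * S⁻¹ * X).det := by
    have hc := conj_submatrix e (fromCols X W) (1 : Matrix (Fin n) (Fin n) ℝ) (fromCols (S⁻¹ * X) W)
    rw [Matrix.mul_one, Matrix.mul_one] at hc
    have hblock : (fromCols X W)ᵀ * (1 : Matrix (Fin n) (Fin n) ℝ) * fromCols (S⁻¹ * X) W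
        = fromBlocks (Xᵀ * S⁻¹ * X) 0 (Wᵀ * (S⁻¹ * X)) 1 := by
      rw [Matrix.mul_one, hTX, fromRows_mul_fromCols, hXW, hW, Matrix.mul_assoc]
    calc B.det * A.det = (Bᵀ * A).det := by rw [det_mul, det_transpose]
      _ = (fromBlocks (Xᵀ * S⁻¹ * X) (0 : Matrix (Fin p) (Fin (n-p)) ℝ)
            (Wᵀ * (S⁻¹ * X)) 1).det := by
          rw [Matrix.mul_one] at hblock
          rw [hc, hblock, det_submatrix_equiv_self]
      _ = (Xᵀ * S⁻¹ * X).det := by rw [det_fromBlocks_zero₁₂, det_one, mul_one]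
  -- algebra
  have key : (Wᵀ * S * W).det * (Xᵀ * X).det * (Xᵀ * S⁻¹ * X).det
      = S.det * (Xᵀ * S⁻¹ * X).det * (Xᵀ * S⁻¹ * X).det := by
    calc (Wᵀ * S * W).det * (Xᵀ * X).det * (Xᵀ * S⁻¹ * X).det
        = ((Xᵀ * S⁻¹ * X).det * (Wᵀ * S * W).det) * (Xᵀ * X).det := by ring
      _ = (S.det * A.det ^ 2) * B.det ^ 2 := by rw [h2, h1]
      _ = S.det * (B.det * A.det) * (B.det * A.det) := by ring
      _ = S.det * (Xᵀ * S⁻¹ * X).det * (Xᵀ * S⁻¹ * X).det := by rw [h3]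
  exact mul_right_cancel₀ hbpos.ne' key
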